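/- With the optimal discriminator d*(z) = t(z)/(t(z)+g(z)), the GAN value function satisfies V(d*) = −log 4 + 2·JSD(t ‖ g), where JSD is the Jensen–Shannon divergence. In particular V(d*) ≥ −log 4, with equality if and only if t = g almost everywhere. -/

import Mathlib

open MeasureTheory Real

lemma aux_le (a b : ℝ) (ha : 0 ≤ a) (hb : 0 < b) : a - b ≤ a * Real.log (a / b) := by
  rcases eq_or_lt_of_le ha with h | h
  · rw [← h]; simp; linarith
  · have hx : 0 < b / a := div_pos hb h
    have hle := Real.log_le_sub_one_of_pos hx
    have hlog : Real.log (a / b) = - Real.log (b / a) := by rw [← Real.log_inv, inv_div]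
    have h1 : 1 - b / a ≤ Real.log (a / b) := by rw [hlog]; linarith
    have h2 : a * (1 - b / a) ≤ a * Real.log (a / b) := mul_le_mul_of_nonneg_left h1 ha
    have h3 : a * (1 - b / a) = a - b := by field_simp
    linarith

lemma aux_eq (a b : ℝ) (ha : 0 ≤ a) (hb : 0 < b)
    (h : a * Real.log (a / b) = a - b) : a = b := by
  rcases eq_or_lt_of_le ha with h0 | h0
  · exfalso; rw [← h0] at h; simp at h; linarith
  · by_contra hne
    have hx : 0 < b / a := div_pos hb h0
    have hxne : b / a ≠ 1 := by
      intro he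
      apply hne
      have : b = a := by field_simp at he; linarith
      linarith
    have hlt := Real.log_lt_sub_one_of_pos hx hxne
    have hlog : Real.log (a / b) = - Real.log (b / a) := by rw [← Real.log_inv, inv_div]
    have h1 : 1 - b / a < Real.log (a / b) := by rw [hlog]; linarith
    have h2 : a * (1 - b / a) < a * Real.log (a / b) := (mul_lt_mul_iff_right₀ h0).mpr h1
    have h3 : a * (1 - b / a) = a - b := by field_simp
    linarith

/-- With the optimal discriminator `d*(z) = t/(t+g)`, the GAN value function equals
`-log 4 + 2 JSD(t‖g)`; in particular it is `≥ -log 4` with equality iff `t = g` a.e. -/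
theorem gan_value_at_optimal_discriminator {Z : Type*} [MeasurableSpace Z] (μ : Measure Z)
    (t g : Z → ℝ)
    (ht : Measurable t) (hg : Measurable g)
    (htnn : ∀ z, 0 ≤ t z) (hgnn : ∀ z, 0 ≤ g z)
    (htint : ∫ z, t z ∂μ = 1) (hgint : ∫ z, g z ∂μ = 1)
    (hpos : ∀ᵐ z ∂μ, 0 < t z + g z)
    (hint1 : Integrable (fun z => t z * log (t z / (t z + g z))) μ)
    (hint2 : Integrable (fun z => g z * log (1 - t z / (t z + g z))) μ)
    (hkl1 : Integrable (fun z => t z * log (t z / ((t z + g z) / 2))) μ)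
    (hkl2 : Integrable (fun z => g z * log (g z / ((t z + g z) / 2))) μ) :
    ((∫ z, t z * log (t z / (t z + g z)) ∂μ) +
        (∫ z, g z * log (1 - t z / (t z + g z)) ∂μ) =
      -log 4 + 2 * ((1 / 2) * (∫ z, t z * log (t z / ((t z + g z) / 2)) ∂μ) +
          (1 / 2) * (∫ z, g z * log (g z / ((t z + g z) / 2)) ∂μ))) ∧
    (-log 4 ≤ (∫ z, t z * log (t z / (t z + g z)) ∂μ) +
        (∫ z, g z * log (1 - t z / (t z + g z)) ∂μ)) ∧
    ((∫ z, t z * log (t z / (t z + g z)) ∂μ) +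
        (∫ z, g z * log (1 - t z / (t z + g z)) ∂μ) = -log 4 ↔ t =ᵐ[μ] g) := by
  -- integrability of t and g
  have hti : Integrable t μ := by
    by_contra h
    rw [integral_undef h] at htint; norm_num at htint
  have hgi : Integrable g μ := by
    by_contra h
    rw [integral_undef h] at hgint; norm_num at hgint
  have hmi : Integrable (fun z => (t z + g z) / 2) μ := (hti.add hgi).div_const 2
  have hlog4 : Real.log 4 = 2 * Real.log 2 := by
    rw [show (4:ℝ) = 2 ^ 2 by norm_num, Real.log_pow]; push_cast; ring
  -- pointwise identities a.e.
  have hid1 : ∀ᵐ z ∂μ, t z * log (t z / (t z + g z)) =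
      t z * log (t z / ((t z + g z) / 2)) - t z * Real.log 2 := by
    filter_upwards [hpos] with z hz
    rcases eq_or_lt_of_le (htnn z) with h0 | h0
    · rw [← h0]; ring
    · rw [Real.log_div (ne_of_gt h0) (ne_of_gt hz),
        Real.log_div (ne_of_gt h0) (by positivity),
        Real.log_div (ne_of_gt hz) (by norm_num)]
      ring
  have hid2 : ∀ᵐ z ∂μ, g z * log (1 - t z / (t z + g z)) =
      g z * log (g z / ((t z + g z) / 2)) - g z * Real.log 2 := by
    filter_upwards [hpos] with z hz
    have hrw : 1 - t z / (t z + g z) = g z / (t z + g z) := by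
      field_simp
      ring
    rw [hrw]
    rcases eq_or_lt_of_le (hgnn z) with h0 | h0
    · rw [← h0]; ring
    · rw [Real.log_div (ne_of_gt h0) (ne_of_gt hz),
        Real.log_div (ne_of_gt h0) (by positivity),
        Real.log_div (ne_of_gt hz) (by norm_num)]
      ring
  -- integral identities
  have hI1 : (∫ z, t z * log (t z / (t z + g z)) ∂μ) =
      (∫ z, t z * log (t z / ((t z + g z) / 2)) ∂μ) - Real.log 2 := by
    rw [integral_congr_ae hid1, integral_sub hkl1 (hti.mul_const (Real.log 2)),
      integral_mul_const, htint, one_mul]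
  have hI2 : (∫ z, g z * log (1 - t z / (t z + g z)) ∂μ) =
      (∫ z, g z * log (g z / ((t z + g z) / 2)) ∂μ) - Real.log 2 := by
    rw [integral_congr_ae hid2, integral_sub hkl2 (hgi.mul_const (Real.log 2)),
      integral_mul_const, hgint, one_mul]
  -- integral of m
  have hmint : ∫ z, (t z + g z) / 2 ∂μ = 1 := by
    rw [integral_div, integral_add hti hgi, htint, hgint]; norm_num
  -- K1, K2 nonneg
  have hK1 : 0 ≤ ∫ z, t z * log (t z / ((t z + g z) / 2)) ∂μ := by
    have hmono : ∫ z, (t z - (t z + g z) / 2) ∂μ ≤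
        ∫ z, t z * log (t z / ((t z + g z) / 2)) ∂μ := by
      refine integral_mono_ae (hti.sub hmi) hkl1 ?_
      filter_upwards [hpos] with z hz
      exact aux_le _ _ (htnn z) (by linarith)
    rwa [integral_sub hti hmi, htint, hmint, sub_self] at hmono
  have hK2 : 0 ≤ ∫ z, g z * log (g z / ((t z + g z) / 2)) ∂μ := by
    have hmono : ∫ z, (g z - (t z + g z) / 2) ∂μ ≤
        ∫ z, g z * log (g z / ((t z + g z) / 2)) ∂μ := by
      refine integral_mono_ae (hgi.sub hmi) hkl2 ?_
      filter_upwards [hpos] with z hz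
      exact aux_le _ _ (hgnn z) (by linarith)
    rwa [integral_sub hgi hmi, hgint, hmint, sub_self] at hmono
  refine ⟨by rw [hI1, hI2, hlog4]; ring, by rw [hI1, hI2, hlog4]; linarith, ?_, ?_⟩
  · -- forward: value = -log 4 → t = g a.e.
    intro h
    rw [hI1, hI2, hlog4] at h
    have hK1' : ∫ z, t z * log (t z / ((t z + g z) / 2)) ∂μ = 0 := by linarith
    set f1 : Z → ℝ := fun z => t z * log (t z / ((t z + g z) / 2)) - (t z - (t z + g z) / 2)
      with hf1def
    have hsub : Integrable (fun z => t z - (t z + g z) / 2) μ := hti.sub hmi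
    have hf1i : Integrable f1 μ := hkl1.sub hsub
    have hf1nn : 0 ≤ᵐ[μ] f1 := by
      filter_upwards [hpos] with z hz
      have := aux_le (t z) ((t z + g z) / 2) (htnn z) (by linarith)
      simp only [hf1def, Pi.zero_apply]; linarith
    have hf1int : ∫ z, f1 z ∂μ = 0 := by
      simp only [hf1def]
      rw [integral_sub hkl1 hsub, integral_sub hti hmi, htint, hmint, hK1']
      ring
    have hf1zero : f1 =ᵐ[μ] 0 :=
      (integral_eq_zero_iff_of_nonneg_ae hf1nn hf1i).mp hf1int
    filter_upwards [hpos, hf1zero] with z hz hfz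
    simp only [hf1def, Pi.zero_apply] at hfz
    have heq : t z * Real.log (t z / ((t z + g z) / 2)) = t z - (t z + g z) / 2 := by
      linarith
    have := aux_eq (t z) ((t z + g z) / 2) (htnn z) (by linarith) heq
    linarith
  · -- converse: t = g a.e. → value = -log 4
    intro h
    have hz1 : ∀ᵐ z ∂μ, t z * log (t z / ((t z + g z) / 2)) = 0 := by
      filter_upwards [hpos, h] with z hz htg
      have ht0 : 0 < t z := by linarith
      rw [← htg]
      rw [show (t z + t z) / 2 = t z by ring, div_self (ne_of_gt ht0), Real.log_one, mul_zero]
    have hz2 : ∀ᵐ z ∂μ, g z * log (g z / ((t z + g z) / 2)) = 0 := by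
      filter_upwards [hpos, h] with z hz htg
      have hg0 : 0 < g z := by rw [htg] at hz; linarith
      rw [htg, show (g z + g z) / 2 = g z by ring, div_self (ne_of_gt hg0), Real.log_one,
        mul_zero]
    rw [hI1, hI2, hlog4, integral_congr_ae hz1, integral_congr_ae hz2, integral_zero]
    ring
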